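/- Let (R_k)_{k∈S} be a family of nonzero commutative rings and R = ∏_{k∈S} R_k. The nilradical of R equals the product ∏_{k∈S} 𝔑(R_k) of the nilradicals if and only if the set of minimal tame primes of R is dense in Spec(R) with respect to the Zariski topology. -/

import Mathlib

/-- For a family of nonzero commutative rings `(R_k)` and `R = ∏ R_k`, the nilradical of
`R` equals the product of the nilradicals `∏ 𝔑(R_k)` if and only if the set of minimal
tame primes of `R` (primes of the form `π_k⁻¹(𝔭)` with `𝔭` a minimal prime of `R_k`)
is dense in `Spec R` with respect to the Zariski topology. -/
theorem stmt_3 {S : Type*} (R : S → Type*) [∀ k, CommRing (R k)] [∀ k, Nontrivial (R k)] :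
    (∀ a : ∀ k, R k, IsNilpotent a ↔ ∀ k, IsNilpotent (a k)) ↔
      Dense {P : PrimeSpectrum (∀ k, R k) |
        ∃ (k : S) (𝔭 : Ideal (R k)), 𝔭 ∈ minimalPrimes (R k) ∧
          P.asIdeal = 𝔭.comap (Pi.evalRingHom R k)} := by
  set T : Set (PrimeSpectrum (∀ k, R k)) := {P : PrimeSpectrum (∀ k, R k) |
        ∃ (k : S) (𝔭 : Ideal (R k)), 𝔭 ∈ minimalPrimes (R k) ∧
          P.asIdeal = 𝔭.comap (Pi.evalRingHom R k)} with hT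
  have hvan : ∀ a : ∀ k, R k,
      a ∈ PrimeSpectrum.vanishingIdeal T ↔ ∀ k, IsNilpotent (a k) := by
    intro a
    rw [PrimeSpectrum.mem_vanishingIdeal]
    constructor
    · intro h k
      have : a k ∈ nilradical (R k) := by
        have hsinf : sInf (minimalPrimes (R k)) = nilradical (R k) :=
          Ideal.sInf_minimalPrimes
        rw [← hsinf]
        refine (Ideal.mem_sInf).mpr fun {𝔭} h𝔭 => ?_
        have hprime : (𝔭.comap (Pi.evalRingHom R k)).IsPrime := by
          haveI : 𝔭.IsPrime := h𝔭.1.1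
          exact Ideal.comap_isPrime _ _
        exact h ⟨_, hprime⟩ ⟨k, 𝔭, h𝔭, rfl⟩
      exact this
    · intro h P hP
      obtain ⟨k, 𝔭, h𝔭, hPeq⟩ := hP
      have : a k ∈ 𝔭 := by
        have : nilradical (R k) ≤ 𝔭 := by
          have hsinf : sInf (minimalPrimes (R k)) = nilradical (R k) :=
            Ideal.sInf_minimalPrimes
          rw [← hsinf]
          exact sInf_le h𝔭
        exact this (h k)
      simp only [hPeq, Ideal.mem_comap, Pi.evalRingHom_apply]
      exact this
  have hdense : Dense T ↔ ∀ a : ∀ k, R k, (∀ k, IsNilpotent (a k)) → IsNilpotent a := by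
    rw [dense_iff_closure_eq, ← PrimeSpectrum.zeroLocus_vanishingIdeal_eq_closure,
      ← Set.top_eq_univ, Set.top_eq_univ, PrimeSpectrum.zeroLocus_eq_univ_iff]
    constructor
    · intro h a ha
      exact h ((hvan a).mpr ha)
    · intro h a ha
      exact h a ((hvan a).mp ha)
  rw [hdense]
  constructor
  · intro h a ha
    exact (h a).mpr ha
  · intro h a
    refine ⟨fun hn k => hn.map (Pi.evalRingHom R k), h a⟩
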